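/- For 0 < a ≤ 1 and Re(s) < 0, the Hurwitz zeta function satisfies ζ(s, a) = (2Γ(1−s)/(2π)^{1−s}) · ( sin(πs/2) · Σ_{n=1}^∞ cos(2πna)/n^{1−s} + cos(πs/2) · Σ_{n=1}^∞ sin(2πna)/n^{1−s} ). -/

import Mathlib

open Complex Real Filter Set MeasureTheory

theorem hurwitz_formula (a : ℝ) (ha : 0 < a) (ha' : a ≤ 1) (s : ℂ) (hs : s.re < 0) :
    HurwitzZeta.hurwitzZeta (a : UnitAddCircle) s =
      2 * Complex.Gamma (1 - s) / ((2 * π : ℝ) : ℂ) ^ (1 - s) *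
        (Complex.sin ((π : ℂ) * s / 2) *
            ∑' n : ℕ, (Real.cos (2 * π * (n + 1) * a) : ℂ) / ((n : ℂ) + 1) ^ (1 - s) +
          Complex.cos ((π : ℂ) * s / 2) *
            ∑' n : ℕ, (Real.sin (2 * π * (n + 1) * a) : ℂ) / ((n : ℂ) + 1) ^ (1 - s)) := by
  have hre : 1 < (1 - s).re := by simp [Complex.sub_re]; linarith
  have hw : ∀ n : ℕ, (1 - s) ≠ -n := by
    intro n h
    have := congrArg Complex.re h
    simp [Complex.sub_re] at this
    linarith [this, Nat.cast_nonneg (α := ℝ) n]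
  have hw' : ((a : UnitAddCircle) ≠ 0) ∨ (1 - s : ℂ) ≠ 1 := by
    right
    intro h
    have : s = 0 := by linear_combination -h
    rw [this] at hs; exact lt_irrefl 0 (by simpa using hs)
  -- sums
  have hcos : (HurwitzZeta.cosZeta a (1 - s)) =
      ∑' n : ℕ, (Real.cos (2 * π * (n + 1) * a) : ℂ) / ((n : ℂ) + 1) ^ (1 - s) := by
    have h := HurwitzZeta.hasSum_nat_cosZeta a hre
    have h0 : (Real.cos (2 * π * a * (0 : ℕ)) : ℂ) / ((0 : ℕ) : ℂ) ^ (1 - s) = 0 := by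
      simp [Complex.zero_cpow (Complex.ne_zero_of_one_lt_re hre)]
    rw [← h.tsum_eq, Summable.tsum_eq_zero_add h.summable, h0, zero_add]
    congr 1; funext n
    have : 2 * π * a * ((n : ℝ) + 1) = 2 * π * ((n : ℝ) + 1) * a := by ring
    push_cast
    ring_nf
  have hsin : (HurwitzZeta.sinZeta a (1 - s)) =
      ∑' n : ℕ, (Real.sin (2 * π * (n + 1) * a) : ℂ) / ((n : ℂ) + 1) ^ (1 - s) := by
    have h := HurwitzZeta.hasSum_nat_sinZeta a hre
    have h0 : (Real.sin (2 * π * a * (0 : ℕ)) : ℂ) / ((0 : ℕ) : ℂ) ^ (1 - s) = 0 := by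
      simp [Complex.zero_cpow (Complex.ne_zero_of_one_lt_re hre)]
    rw [← h.tsum_eq, Summable.tsum_eq_zero_add h.summable, h0, zero_add]
    congr 1; funext n
    have : 2 * π * a * ((n : ℝ) + 1) = 2 * π * ((n : ℝ) + 1) * a := by ring
    push_cast
    ring_nf
  have key : HurwitzZeta.hurwitzZeta (a : UnitAddCircle) s =
      HurwitzZeta.hurwitzZetaEven a (1 - (1 - s)) + HurwitzZeta.hurwitzZetaOdd a (1 - (1 - s)) := by
    rw [show (1 : ℂ) - (1 - s) = s by ring, HurwitzZeta.hurwitzZeta]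
  rw [key, HurwitzZeta.hurwitzZetaEven_one_sub a hw hw', HurwitzZeta.hurwitzZetaOdd_one_sub a hw,
    hcos, hsin]
  have hc : Complex.cos ((π : ℂ) * (1 - s) / 2) = Complex.sin ((π : ℂ) * s / 2) := by
    rw [show (π : ℂ) * (1 - s) / 2 = (π : ℂ) / 2 - (π : ℂ) * s / 2 by ring, Complex.cos_pi_div_two_sub]
  have hsn : Complex.sin ((π : ℂ) * (1 - s) / 2) = Complex.cos ((π : ℂ) * s / 2) := by
    rw [show (π : ℂ) * (1 - s) / 2 = (π : ℂ) / 2 - (π : ℂ) * s / 2 by ring, Complex.sin_pi_div_two_sub]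
  rw [hc, hsn]
  have hpow : ((2 : ℂ) * π) ^ (-(1 - s)) = (((2 * π : ℝ) : ℂ) ^ (1 - s))⁻¹ := by
    rw [Complex.cpow_neg]
    norm_num
  rw [hpow]
  set C := ∑' n : ℕ, (Real.cos (2 * π * (n + 1) * a) : ℂ) / ((n : ℂ) + 1) ^ (1 - s) with hC
  set S := ∑' n : ℕ, (Real.sin (2 * π * (n + 1) * a) : ℂ) / ((n : ℂ) + 1) ^ (1 - s) with hS
  clear_value C S
  field_simp
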